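/- Let T be a tree with positive edge weights, no degree-2 vertices, and at least three leaves, and let u, v ∈ L(T) be distinct leaves maximizing z(u,v) := d(u,v) + Σ_{x ∈ L(T)} d(x,p_{uv}) over all pairs of distinct leaves, where p_{uv} is the unique u-v-path. Then u and v form a cherry in T (are adjacent to a common vertex w), and ℓ(w) = z(u,v) for the mid-point w. -/

import Mathlib

open SimpleGraph Finset

noncomputable section

variable {V : Type*}

/-- The weight of a walk: sum of the weights of its edges. -/
def walkWeight {G : SimpleGraph V} (w : Sym2 V → ℝ) {x y : V} (p : G.Walk x y) : ℝ :=
  (p.edges.map w).sum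

/-- The unique path between two vertices of a tree. -/
noncomputable def tpath {G : SimpleGraph V} (hT : G.IsTree) (x y : V) : G.Walk x y :=
  (hT.existsUnique_path x y).choose

/-- The weighted distance between two vertices of a tree: the weight of the unique path. -/
noncomputable def tdist {G : SimpleGraph V} (hT : G.IsTree) (w : Sym2 V → ℝ) (x y : V) : ℝ :=
  walkWeight w (tpath hT x y)

/-- The distance from a vertex `x` to a path `p`: the minimum distance from `x`
to a vertex on `p`. -/
noncomputable def distToPath {G : SimpleGraph V} (hT : G.IsTree) (w : Sym2 V → ℝ)
    (x : V) {a b : V} (p : G.Walk a b) : ℝ :=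
  sInf {r | ∃ y ∈ p.support, r = tdist hT w x y}

/-- The set of leaves of a graph. -/
def leaves (G : SimpleGraph V) [Fintype V] [DecidableRel G.Adj] : Finset V :=
  Finset.univ.filter (fun v => G.degree v = 1)

/-- The leaf-status of a vertex: the sum of its distances to all leaves. -/
noncomputable def leafStatus {G : SimpleGraph V} [Fintype V] [DecidableRel G.Adj]
    (hT : G.IsTree) (w : Sym2 V → ℝ) (u : V) : ℝ :=
  ∑ x ∈ leaves G, tdist hT w u x

/-- The leaf-status of a path: the sum of the distances of all leaves to the path. -/
noncomputable def pathLeafStatus {G : SimpleGraph V} [Fintype V] [DecidableRel G.Adj]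
    (hT : G.IsTree) (w : Sym2 V → ℝ) {a b : V} (p : G.Walk a b) : ℝ :=
  ∑ x ∈ leaves G, distToPath hT w x p

/-- `Lside hT w u v` is the set `L^{uv}_u` of leaves strictly closer to `u` than to `v`. -/
noncomputable def Lside {G : SimpleGraph V} [Fintype V] [DecidableRel G.Adj]
    (hT : G.IsTree) (w : Sym2 V → ℝ) (u v : V) : Finset V :=
  (leaves G).filter (fun x => tdist hT w x u < tdist hT w x v)

/-! ### Auxiliary lemmas -/

variable {G : SimpleGraph V}

lemma tpath_isPath (hT : G.IsTree) (x y : V) : (tpath hT x y).IsPath :=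
  (hT.existsUnique_path x y).choose_spec.1

lemma tpath_eq (hT : G.IsTree) {x y : V} (p : G.Walk x y) (hp : p.IsPath) :
    tpath hT x y = p :=
  ((hT.existsUnique_path x y).choose_spec.2 p hp).symm

lemma walkWeight_append (w : Sym2 V → ℝ) {x y z : V} (p : G.Walk x y) (q : G.Walk y z) :
    walkWeight w (p.append q) = walkWeight w p + walkWeight w q := by
  simp [walkWeight, Walk.edges_append]

lemma tpath_self (hT : G.IsTree) (x : V) : tpath hT x x = Walk.nil :=
  tpath_eq hT _ Walk.IsPath.nil

@[simp] lemma tdist_self (hT : G.IsTree) (w : Sym2 V → ℝ) (x : V) : tdist hT w x x = 0 := by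
  simp [tdist, tpath_self, walkWeight]

lemma tpath_reverse (hT : G.IsTree) (x y : V) : (tpath hT x y).reverse = tpath hT y x :=
  (tpath_eq hT _ ((tpath_isPath hT x y).reverse)).symm

lemma tdist_symm (hT : G.IsTree) (w : Sym2 V → ℝ) (x y : V) :
    tdist hT w x y = tdist hT w y x := by
  unfold tdist walkWeight
  rw [← tpath_reverse hT y x, Walk.edges_reverse, List.map_reverse, List.sum_reverse]

lemma tdist_split (hT : G.IsTree) (w : Sym2 V → ℝ) [DecidableEq V] {x y q : V}
    (hq : q ∈ (tpath hT x y).support) :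
    tdist hT w x y = tdist hT w x q + tdist hT w q y := by
  have hs := (tpath hT x y).take_spec hq
  have hP := tpath_isPath hT x y
  have h1 : tpath hT x q = (tpath hT x y).takeUntil q hq := tpath_eq hT _ (hP.takeUntil hq)
  have h2 : tpath hT q y = (tpath hT x y).dropUntil q hq := tpath_eq hT _ (hP.dropUntil hq)
  rw [tdist, tdist, tdist, h1, h2, ← walkWeight_append, hs]

lemma tpath_adj (hT : G.IsTree) {x y : V} (h : G.Adj x y) :
    tpath hT x y = Walk.cons h Walk.nil := by
  refine tpath_eq hT _ ?_
  rw [Walk.isPath_def]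
  simp [h.ne]

lemma tdist_adj (hT : G.IsTree) (w : Sym2 V → ℝ) {x y : V} (h : G.Adj x y) :
    tdist hT w x y = w s(x, y) := by
  simp [tdist, tpath_adj hT h, walkWeight]

lemma walkWeight_nonneg (w : Sym2 V → ℝ) (hw : ∀ e ∈ G.edgeSet, 0 < w e) {x y : V}
    (p : G.Walk x y) : 0 ≤ walkWeight w p := by
  refine List.sum_nonneg ?_
  intro r hr
  obtain ⟨e, he, rfl⟩ := List.mem_map.1 hr
  exact (hw e (p.edges_subset_edgeSet he)).le

lemma tdist_nonneg (hT : G.IsTree) (w : Sym2 V → ℝ) (hw : ∀ e ∈ G.edgeSet, 0 < w e)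
    (x y : V) : 0 ≤ tdist hT w x y :=
  walkWeight_nonneg w hw _

lemma tdist_pos (hT : G.IsTree) (w : Sym2 V → ℝ) (hw : ∀ e ∈ G.edgeSet, 0 < w e) {x y : V}
    (hxy : x ≠ y) : 0 < tdist hT w x y := by
  rw [tdist]
  cases h : tpath hT x y with
  | nil => exact absurd rfl hxy
  | @cons _ b _ h' q =>
    have : walkWeight w (Walk.cons h' q) = w s(x, b) + walkWeight w q := by
      simp [walkWeight, Walk.edges_cons]
    rw [this]
    have h1 : 0 < w s(x, b) := hw _ ((SimpleGraph.mem_edgeSet G).2 h')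
    linarith [walkWeight_nonneg w hw q]

lemma tdist_concat (hT : G.IsTree) (w : Sym2 V → ℝ) {x p q : V} (h : G.Adj p q)
    (hq : q ∉ (tpath hT x p).support) :
    tdist hT w x q = tdist hT w x p + w s(p, q) := by
  have hpath : ((tpath hT x p).append (Walk.cons h Walk.nil)).IsPath := by
    rw [Walk.isPath_def, Walk.support_append]
    simp only [Walk.support_cons, Walk.support_nil, List.tail_cons]
    rw [List.nodup_append]
    refine ⟨(tpath_isPath hT x p).support_nodup, List.nodup_singleton q, ?_⟩
    intro a ha b hb
    simp only [List.mem_singleton] at hb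
    rintro rfl
    exact hq (hb ▸ ha)
  have heq := tpath_eq hT _ hpath
  rw [tdist, heq, walkWeight_append]
  simp [walkWeight, tdist]

lemma tpath_decomp (hT : G.IsTree) {x y : V} (hxy : x ≠ y) :
    ∃ (t : V) (h : G.Adj x t), tpath hT x y = Walk.cons h (tpath hT t y) := by
  cases h : tpath hT x y with
  | nil => exact absurd rfl hxy
  | @cons _ b _ h' q =>
    have hq : q.IsPath := by
      have := tpath_isPath hT x y
      rw [h] at this
      exact this.of_cons
    exact ⟨b, h', by rw [tpath_eq hT q hq]⟩

lemma mem_tpath_of_mem (hT : G.IsTree) [DecidableEq V] {x p q q' : V}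
    (hq : G.Adj p q) (h1 : q ∈ (tpath hT x p).support)
    (h2 : q' ∈ (tpath hT x p).support) (hne : q' ≠ p) :
    q' ∈ (tpath hT x q).support := by
  have hP := tpath_isPath hT x p
  have htake : tpath hT x q = (tpath hT x p).takeUntil q h1 := tpath_eq hT _ (hP.takeUntil h1)
  have hdrop : (tpath hT x p).dropUntil q h1 = Walk.cons hq.symm Walk.nil := by
    rw [← tpath_eq hT _ (hP.dropUntil h1), tpath_adj hT hq.symm]
  rw [← (tpath hT x p).take_spec h1, Walk.mem_support_append_iff] at h2
  rcases h2 with h2 | h2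
  · rwa [htake]
  · rw [hdrop] at h2
    simp only [Walk.support_cons, Walk.support_nil, List.mem_cons, List.mem_singleton] at h2
    rcases h2 with rfl | h2
    · rw [htake]
      exact Walk.end_mem_support _
    · simp only [List.not_mem_nil, or_false] at h2
      exact absurd h2 hne

lemma not_two_nbrs_support (hT : G.IsTree) (w : Sym2 V → ℝ) (hw : ∀ e ∈ G.edgeSet, 0 < w e)
    [DecidableEq V] {x p q q' : V}
    (hq : G.Adj p q) (hq' : G.Adj p q') (hne : q ≠ q')
    (h1 : q ∈ (tpath hT x p).support) (h2 : q' ∈ (tpath hT x p).support) : False := by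
  have m1 : q' ∈ (tpath hT x q).support := mem_tpath_of_mem hT hq h1 h2 hq'.ne'
  have m2 : q ∈ (tpath hT x q').support := mem_tpath_of_mem hT hq' h2 h1 hq.ne'
  have e1 := tdist_split hT w m1
  have e2 := tdist_split hT w m2
  have e3 := tdist_symm hT w q' q
  have e4 := tdist_pos hT w hw (Ne.symm hne)
  linarith

lemma exists_leaf_dir [Fintype V] [DecidableRel G.Adj] (hT : G.IsTree) {p q : V}
    (hpq : G.Adj p q) :
    ∃ x, G.degree x = 1 ∧ q ∈ (tpath hT x p).support := by
  classical
  set S : Finset V := univ.filter (fun y => q ∈ (tpath hT y p).support) with hS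
  have hqS : q ∈ S := by
    simp only [hS, mem_filter, mem_univ, true_and]
    exact Walk.start_mem_support _
  obtain ⟨x, hxS, hmax⟩ := Finset.exists_max_image S (fun y => (tpath hT y p).length) ⟨q, hqS⟩
  have hxq : q ∈ (tpath hT x p).support := by
    simpa only [hS, mem_filter, mem_univ, true_and] using hxS
  have hxp : x ≠ p := by
    rintro rfl
    rw [tpath_eq hT Walk.nil Walk.IsPath.nil] at hxq
    simp only [Walk.support_nil, List.mem_singleton] at hxq
    exact hpq.ne' hxq
  obtain ⟨t, hadj, hdec⟩ := tpath_decomp hT hxp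
  refine ⟨x, ?_, hxq⟩
  by_contra hdx
  have hge1 : 1 ≤ G.degree x := by
    rw [← card_neighborFinset_eq_degree]
    exact Finset.card_pos.2 ⟨t, (mem_neighborFinset G x t).2 hadj⟩
  have hge2 : 1 < G.degree x := lt_of_le_of_ne hge1 (Ne.symm hdx)
  rw [← card_neighborFinset_eq_degree] at hge2
  obtain ⟨t', ht'mem, ht'ne⟩ := Finset.exists_mem_ne hge2 t
  have hadj' : G.Adj x t' := (mem_neighborFinset G x t').1 ht'mem
  by_cases hc : t' ∈ (tpath hT x p).support
  · rw [hdec] at hc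
    simp only [Walk.support_cons, List.mem_cons] at hc
    rcases hc with rfl | hc
    · exact hadj'.ne rfl
    · have hxnot : x ∉ (tpath hT t p).support := by
        have := (tpath_isPath hT x p).support_nodup
        rw [hdec] at this
        simp only [Walk.support_cons, List.nodup_cons] at this
        exact this.1
      have htake : ((tpath hT t p).takeUntil t' hc).IsPath :=
        (tpath_isPath hT t p).takeUntil hc
      have hW : (Walk.cons hadj ((tpath hT t p).takeUntil t' hc)).IsPath :=
        htake.cons (fun hx => hxnot (Walk.support_takeUntil_subset _ hc hx))
      have h5 : tpath hT x t' = Walk.cons hadj ((tpath hT t p).takeUntil t' hc) :=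
        tpath_eq hT _ hW
      have h6 : tpath hT x t' = Walk.cons hadj' Walk.nil := tpath_adj hT hadj'
      have : t = t' := by
        have h8 := h5.symm.trans h6
        have h7 := congrArg (fun (W : G.Walk x t') => W.getVert 1) h8
        simpa using h7
      exact ht'ne this.symm
  · have hW : (Walk.cons hadj'.symm (tpath hT x p)).IsPath :=
      (tpath_isPath hT x p).cons hc
    have h5 : tpath hT t' p = Walk.cons hadj'.symm (tpath hT x p) := tpath_eq hT _ hW
    have ht'S : t' ∈ S := by
      simp only [hS, mem_filter, mem_univ, true_and, h5, Walk.support_cons]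
      exact List.mem_cons_of_mem _ hxq
    have := hmax t' ht'S
    rw [h5] at this
    simp only [Walk.length_cons] at this
    omega

lemma distToPath_le (hT : G.IsTree) (w : Sym2 V → ℝ) (hw : ∀ e ∈ G.edgeSet, 0 < w e)
    {x a b y : V} {p : G.Walk a b} (hy : y ∈ p.support) :
    distToPath hT w x p ≤ tdist hT w x y := by
  refine csInf_le ⟨0, ?_⟩ ⟨y, hy, rfl⟩
  rintro r ⟨z, hz, rfl⟩
  exact tdist_nonneg hT w hw x z

lemma distToPath_nonneg (hT : G.IsTree) (w : Sym2 V → ℝ) (hw : ∀ e ∈ G.edgeSet, 0 < w e)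
    (x : V) {a b : V} (p : G.Walk a b) :
    0 ≤ distToPath hT w x p := by
  refine le_csInf ⟨tdist hT w x a, a, p.start_mem_support, rfl⟩ ?_
  rintro r ⟨z, hz, rfl⟩
  exact tdist_nonneg hT w hw x z

lemma distToPath_eq_zero (hT : G.IsTree) (w : Sym2 V → ℝ) (hw : ∀ e ∈ G.edgeSet, 0 < w e)
    {x a b : V} {p : G.Walk a b} (hx : x ∈ p.support) :
    distToPath hT w x p = 0 := by
  refine le_antisymm ?_ (distToPath_nonneg hT w hw x p)
  have := distToPath_le hT w hw (x := x) hx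
  rwa [tdist_self] at this

lemma distToPath_eq_tdist (hT : G.IsTree) (w : Sym2 V → ℝ) (hw : ∀ e ∈ G.edgeSet, 0 < w e)
    {x a b y : V} {p : G.Walk a b} (hy : y ∈ p.support)
    (hmin : ∀ z ∈ p.support, tdist hT w x y ≤ tdist hT w x z) :
    distToPath hT w x p = tdist hT w x y := by
  refine le_antisymm (distToPath_le hT w hw hy) ?_
  refine le_csInf ⟨tdist hT w x a, a, p.start_mem_support, rfl⟩ ?_
  rintro r ⟨z, hz, rfl⟩
  exact hmin z hz

lemma tdist_leaf (hT : G.IsTree) (w : Sym2 V → ℝ) [Fintype V] [DecidableRel G.Adj]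
    {u m y : V} (hu : G.degree u = 1) (hm : G.Adj u m) (hy : y ≠ u) :
    tdist hT w u y = w s(u, m) + tdist hT w m y := by
  obtain ⟨t, ht, hdec⟩ := tpath_decomp hT (Ne.symm hy)
  have htm : t = m := by
    have h1 : G.neighborFinset u ⊆ {m} := by
      intro z hz
      have hcard : (G.neighborFinset u).card = 1 := by
        rw [card_neighborFinset_eq_degree]; exact hu
      have hmmem : m ∈ G.neighborFinset u := (mem_neighborFinset G u m).2 hm
      rw [Finset.card_eq_one] at hcard
      obtain ⟨c, hc⟩ := hcard
      rw [hc] at hz hmmem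
      simp only [Finset.mem_singleton] at hz hmmem
      simp [hz, ← hmmem]
    have := h1 ((mem_neighborFinset G u t).2 ht)
    simpa using this
  subst htm
  rw [tdist, hdec]
  simp [walkWeight, tdist]

lemma mem_leaves_iff [Fintype V] [DecidableRel G.Adj] {x : V} :
    x ∈ leaves G ↔ G.degree x = 1 := by simp [leaves]

/-- the cherry identity -/
lemma cherry_z (hT : G.IsTree) (w : Sym2 V → ℝ) (hw : ∀ e ∈ G.edgeSet, 0 < w e)
    [Fintype V] [DecidableRel G.Adj] {a b m : V}
    (ha : G.degree a = 1) (hb : G.degree b = 1) (hab : a ≠ b)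
    (ham : G.Adj a m) (hbm : G.Adj b m) :
    leafStatus hT w m = tdist hT w a b + pathLeafStatus hT w (tpath hT a b) := by
  classical
  have hmdeg : G.degree m ≠ 1 := by
    intro h1
    have hcard : (G.neighborFinset m).card = 1 := by
      rw [card_neighborFinset_eq_degree]; exact h1
    have h2 : ({a, b} : Finset V) ⊆ G.neighborFinset m := by
      intro z hz
      simp only [Finset.mem_insert, Finset.mem_singleton] at hz
      rcases hz with rfl | rfl
      · exact (mem_neighborFinset G m z).2 ham.symm
      · exact (mem_neighborFinset G m z).2 hbm.symm
    have := Finset.card_le_card h2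
    rw [Finset.card_insert_of_notMem (by simpa using hab), Finset.card_singleton] at this
    omega
  set W : G.Walk a b := Walk.cons ham (Walk.cons hbm.symm Walk.nil) with hW
  have hWpath : W.IsPath := by
    rw [Walk.isPath_def, hW]
    simp [ham.ne, hab, hbm.ne']
  have hPW : tpath hT a b = W := tpath_eq hT W hWpath
  have hsupp : (tpath hT a b).support = [a, m, b] := by rw [hPW]; simp [hW]
  have wam_pos : 0 < w s(a, m) := hw _ ((SimpleGraph.mem_edgeSet G).2 ham)
  have wbm_pos : 0 < w s(b, m) := hw _ ((SimpleGraph.mem_edgeSet G).2 hbm)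
  have hdx : ∀ x ∈ leaves G, x ≠ a → x ≠ b →
      distToPath hT w x (tpath hT a b) = tdist hT w x m := by
    intro x hxL hxa hxb
    have hxa' : tdist hT w x a = tdist hT w x m + w s(a, m) := by
      rw [tdist_symm hT w x a, tdist_leaf hT w ha ham hxa, tdist_symm hT w m x]
      ring
    have hxb' : tdist hT w x b = tdist hT w x m + w s(b, m) := by
      rw [tdist_symm hT w x b, tdist_leaf hT w hb hbm hxb, tdist_symm hT w m x]
      ring
    refine distToPath_eq_tdist hT w hw (by rw [hsupp]; simp) ?_
    intro z hz
    rw [hsupp] at hz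
    simp only [List.mem_cons, List.mem_singleton, List.not_mem_nil, or_false] at hz
    rcases hz with rfl | rfl | rfl
    · rw [hxa']; linarith
    · rfl
    · rw [hxb']; linarith
  have hda : distToPath hT w a (tpath hT a b) = 0 :=
    distToPath_eq_zero hT w hw (by rw [hsupp]; simp)
  have hdb : distToPath hT w b (tpath hT a b) = 0 :=
    distToPath_eq_zero hT w hw (by rw [hsupp]; simp)
  have haL : a ∈ leaves G := mem_leaves_iff.2 ha
  have hbL : b ∈ leaves G := mem_leaves_iff.2 hb
  have hab' : b ∈ (leaves G).erase a := Finset.mem_erase.2 ⟨Ne.symm hab, hbL⟩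
  have htab : tdist hT w a b = w s(a, m) + w s(b, m) := by
    rw [tdist, hPW, hW]
    simp [walkWeight, Sym2.eq_swap]
  have split : ∀ f : V → ℝ, ∑ x ∈ leaves G, f x
      = f a + f b + ∑ x ∈ ((leaves G).erase a).erase b, f x := by
    intro f
    rw [← Finset.add_sum_erase _ f haL, ← Finset.add_sum_erase _ f hab']
    ring
  rw [leafStatus, pathLeafStatus, split, split, hda, hdb]
  have h1 : tdist hT w m a = w s(a, m) := by
    rw [tdist_adj hT w ham.symm, Sym2.eq_swap]
  have h2 : tdist hT w m b = w s(b, m) := by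
    rw [tdist_adj hT w hbm.symm, Sym2.eq_swap]
  have h3 : ∑ x ∈ ((leaves G).erase a).erase b, tdist hT w m x
      = ∑ x ∈ ((leaves G).erase a).erase b, distToPath hT w x (tpath hT a b) := by
    refine Finset.sum_congr rfl ?_
    intro x hx
    have hxb : x ≠ b := (Finset.mem_erase.1 hx).1
    have hxa : x ≠ a := (Finset.mem_erase.1 (Finset.mem_erase.1 hx).2).1
    have hxL : x ∈ leaves G := (Finset.mem_erase.1 (Finset.mem_erase.1 hx).2).2
    rw [hdx x hxL hxa hxb, tdist_symm]
  rw [h1, h2, h3, htab]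
  ring

/-- difference of leaf statuses across an edge -/
lemma ell_diff (hT : G.IsTree) (w : Sym2 V → ℝ) (hw : ∀ e ∈ G.edgeSet, 0 < w e)
    [Fintype V] [DecidableRel G.Adj] [DecidableEq V] {p q : V} (hpq : G.Adj p q) :
    leafStatus hT w p - leafStatus hT w q
      = ((((leaves G).filter (fun x => q ∈ (tpath hT x p).support)).card : ℝ)
          - (((leaves G).filter (fun x => q ∉ (tpath hT x p).support)).card : ℝ)) * w s(p, q) := by
  classical
  have key : ∀ x : V, tdist hT w p x - tdist hT w q x
      = (if q ∈ (tpath hT x p).support then (1 : ℝ) else -1) * w s(p, q) := by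
    intro x
    by_cases hc : q ∈ (tpath hT x p).support
    · rw [if_pos hc]
      have h1 := tdist_split hT w hc
      have h2 : tdist hT w q p = w s(p, q) := by
        rw [tdist_adj hT w hpq.symm, Sym2.eq_swap]
      rw [tdist_symm hT w p x, tdist_symm hT w q x]
      linarith
    · rw [if_neg hc]
      have h1 := tdist_concat hT w hpq hc
      rw [tdist_symm hT w p x, tdist_symm hT w q x]
      linarith
  have hsum : leafStatus hT w p - leafStatus hT w q
      = ∑ x ∈ leaves G, (tdist hT w p x - tdist hT w q x) := by
    rw [leafStatus, leafStatus, Finset.sum_sub_distrib]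
  rw [hsum]
  have : ∑ x ∈ leaves G, (tdist hT w p x - tdist hT w q x)
      = ∑ x ∈ leaves G, (if q ∈ (tpath hT x p).support then (1 : ℝ) else -1) * w s(p, q) :=
    Finset.sum_congr rfl (fun x _ => key x)
  rw [this, ← Finset.sum_filter_add_sum_filter_not (leaves G)
    (fun x => q ∈ (tpath hT x p).support)]
  have e1 : ∑ x ∈ (leaves G).filter (fun x => q ∈ (tpath hT x p).support),
      ((if q ∈ (tpath hT x p).support then (1 : ℝ) else -1) * w s(p, q))
      = ∑ _x ∈ (leaves G).filter (fun x => q ∈ (tpath hT x p).support), w s(p, q) :=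
    Finset.sum_congr rfl (fun x hx => by rw [if_pos (Finset.mem_filter.1 hx).2, one_mul])
  have e2 : ∑ x ∈ (leaves G).filter (fun x => q ∉ (tpath hT x p).support),
      ((if q ∈ (tpath hT x p).support then (1 : ℝ) else -1) * w s(p, q))
      = ∑ _x ∈ (leaves G).filter (fun x => q ∉ (tpath hT x p).support), -w s(p, q) :=
    Finset.sum_congr rfl (fun x hx => by rw [if_neg (Finset.mem_filter.1 hx).2]; ring)
  rw [e1, e2, Finset.sum_const, Finset.sum_const, nsmul_eq_mul, nsmul_eq_mul]
  ring

/-- leaf has a unique neighbor -/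
lemma leaf_nbr_unique [Fintype V] [DecidableRel G.Adj] {u m t : V}
    (hu : G.degree u = 1) (hm : G.Adj u m) (ht : G.Adj u t) : t = m := by
  have hcard : (G.neighborFinset u).card = 1 := by
    rw [card_neighborFinset_eq_degree]; exact hu
  rw [Finset.card_eq_one] at hcard
  obtain ⟨c, hc⟩ := hcard
  have h1 : m ∈ G.neighborFinset u := (mem_neighborFinset G u m).2 hm
  have h2 : t ∈ G.neighborFinset u := (mem_neighborFinset G u t).2 ht
  rw [hc, Finset.mem_singleton] at h1 h2
  rw [h1, h2]

/-- distinct leaves `u, v` maximizing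
`z(u,v) = d(u,v) + Σ_{x∈L} d(x, p_{uv})` form a cherry, whose mid-point `m`
satisfies `ℓ(m) = z(u,v)`. -/
theorem stmt9 {V : Type*} [Fintype V] {G : SimpleGraph V} [DecidableRel G.Adj]
    (hT : G.IsTree) (w : Sym2 V → ℝ) (hw : ∀ e ∈ G.edgeSet, 0 < w e)
    (hdeg : ∀ x : V, G.degree x ≠ 2) (hL : 3 ≤ (leaves G).card)
    (u v : V) (hu : u ∈ leaves G) (hv : v ∈ leaves G) (huv : u ≠ v)
    (hmax : ∀ a ∈ leaves G, ∀ b ∈ leaves G, a ≠ b →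
      tdist hT w a b + pathLeafStatus hT w (tpath hT a b) ≤
        tdist hT w u v + pathLeafStatus hT w (tpath hT u v)) :
    ∃ m : V, G.Adj u m ∧ G.Adj v m ∧
      leafStatus hT w m =
        tdist hT w u v + pathLeafStatus hT w (tpath hT u v) := by
  classical
  have hu1 : G.degree u = 1 := mem_leaves_iff.1 hu
  have hv1 : G.degree v = 1 := mem_leaves_iff.1 hv
  obtain ⟨m₁, hum₁, hdec₁⟩ := tpath_decomp hT huv
  by_cases hm₁v : m₁ = v
  · -- u adjacent to v : impossible since there is a third leaf
    exfalso
    have huv' : G.Adj u v := hm₁v ▸ hum₁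
    have hnon : (((leaves G).erase u).erase v).Nonempty := by
      rw [← Finset.card_pos]
      have h1 : (leaves G).card - 1 ≤ ((leaves G).erase u).card :=
        Finset.pred_card_le_card_erase
      have h2 : ((leaves G).erase u).card - 1 ≤ (((leaves G).erase u).erase v).card :=
        Finset.pred_card_le_card_erase
      omega
    obtain ⟨t, ht⟩ := hnon
    have htv : t ≠ v := (Finset.mem_erase.1 ht).1
    have htu : t ≠ u := (Finset.mem_erase.1 (Finset.mem_erase.1 ht).2).1
    obtain ⟨t₁, h1, hd1⟩ := tpath_decomp hT (Ne.symm htu)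
    have ht₁ : t₁ = v := leaf_nbr_unique hu1 huv' h1
    have ht₁1 : G.degree t₁ = 1 := by rw [ht₁]; exact hv1
    have ht₁t : t₁ ≠ t := by rw [ht₁]; exact Ne.symm htv
    have hAdj : G.Adj t₁ u := by rw [ht₁]; exact huv'.symm
    obtain ⟨t₂, h2, hd2⟩ := tpath_decomp hT ht₁t
    have ht₂ : t₂ = u := leaf_nbr_unique ht₁1 hAdj h2
    have ht₂mem : t₂ ∈ (tpath hT t₁ t).support := by
      rw [hd2, Walk.support_cons]
      exact List.mem_cons_of_mem _ (Walk.start_mem_support _)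
    have humem : u ∈ (tpath hT t₁ t).support := ht₂ ▸ ht₂mem
    have hnd := (tpath_isPath hT u t).support_nodup
    rw [hd1, Walk.support_cons] at hnd
    exact (List.nodup_cons.1 hnd).1 humem
  obtain ⟨m₂, hm₁m₂, hdec₂⟩ := tpath_decomp hT hm₁v
  by_cases hm₂v : m₂ = v
  · -- cherry : done
    subst hm₂v
    exact ⟨m₁, hum₁, hm₁m₂.symm, cherry_z hT w hw hu1 hv1 huv hum₁ hm₁m₂.symm⟩
  · exfalso
    have hnd := (tpath_isPath hT u v).support_nodup
    rw [hdec₁, Walk.support_cons, hdec₂, Walk.support_cons] at hnd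
    have hu_not : u ∉ m₁ :: (tpath hT m₂ v).support := (List.nodup_cons.1 hnd).1
    have hm₁_not : m₁ ∉ (tpath hT m₂ v).support :=
      (List.nodup_cons.1 (List.nodup_cons.1 hnd).2).1
    have hum₂ : u ≠ m₂ := by
      intro h
      exact hu_not (by rw [h]; exact List.mem_cons_of_mem _ (Walk.start_mem_support _))
    obtain ⟨n₂, hm₂n₂, hdec₃⟩ := tpath_decomp hT hm₂v
    have hn₂mem : n₂ ∈ (tpath hT m₂ v).support := by
      rw [hdec₃, Walk.support_cons]
      exact List.mem_cons_of_mem _ (Walk.start_mem_support _)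
    have hm₁n₂ : m₁ ≠ n₂ := fun h => hm₁_not (h ▸ hn₂mem)
    -- m₂ has a third neighbor q''
    have hdm₂ : 3 ≤ (G.neighborFinset m₂).card := by
      have hsub : ({m₁, n₂} : Finset V) ⊆ G.neighborFinset m₂ := by
        intro z hz
        simp only [Finset.mem_insert, Finset.mem_singleton] at hz
        rcases hz with rfl | rfl
        · exact (mem_neighborFinset G m₂ z).2 hm₁m₂.symm
        · exact (mem_neighborFinset G m₂ z).2 hm₂n₂
      have h2 : 2 ≤ (G.neighborFinset m₂).card := by
        have := Finset.card_le_card hsub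
        rwa [Finset.card_insert_of_notMem (by simpa using hm₁n₂),
          Finset.card_singleton] at this
      have h3 := hdeg m₂
      rw [← card_neighborFinset_eq_degree] at h3
      omega
    have hq''ex : (G.neighborFinset m₂ \ {m₁, n₂}).Nonempty := by
      by_contra h
      rw [Finset.not_nonempty_iff_eq_empty, Finset.sdiff_eq_empty_iff_subset] at h
      have := Finset.card_le_card h
      have h2 : ({m₁, n₂} : Finset V).card ≤ 2 :=
        (Finset.card_insert_le _ _).trans (by simp)
      omega
    obtain ⟨q'', hq''⟩ := hq''ex
    rw [Finset.mem_sdiff] at hq''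
    have hq''adj : G.Adj m₂ q'' := (mem_neighborFinset G m₂ q'').1 hq''.1
    have hq''m₁ : q'' ≠ m₁ := fun h => hq''.2 (by simp [h])
    have hq''n₂ : q'' ≠ n₂ := fun h => hq''.2 (by simp [h])
    obtain ⟨s, hs1, hsq⟩ := exists_leaf_dir hT hq''adj
    have hsL : s ∈ leaves G := mem_leaves_iff.2 hs1
    have hsu : s ≠ u := by
      intro hs_eq
      rw [hs_eq] at hsq
      obtain ⟨t, hut, hdt⟩ := tpath_decomp hT hum₂
      have htm : t = m₁ := leaf_nbr_unique hu1 hum₁ hut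
      have ht_mem : t ∈ (tpath hT u m₂).support := by
        rw [hdt, Walk.support_cons]
        exact List.mem_cons_of_mem _ (Walk.start_mem_support _)
      have hm₁mem : m₁ ∈ (tpath hT u m₂).support := htm ▸ ht_mem
      exact not_two_nbrs_support hT w hw hm₁m₂.symm hq''adj (Ne.symm hq''m₁) hm₁mem hsq
    have hsv : s ≠ v := by
      intro hs_eq
      rw [hs_eq] at hsq
      have hrev : n₂ ∈ (tpath hT v m₂).support := by
        rw [← tpath_reverse hT m₂ v, Walk.support_reverse, List.mem_reverse]
        exact hn₂mem
      exact not_two_nbrs_support hT w hw hm₂n₂ hq''adj (Ne.symm hq''n₂) hrev hsq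
    have hw₁₂ : 0 < w s(m₁, m₂) := hw _ ((SimpleGraph.mem_edgeSet G).2 hm₁m₂)
    -- key identity : d(s,m₁) = d(s,m₂) + w(m₁m₂)
    have hkey : tdist hT w s m₁ = tdist hT w s m₂ + w s(m₁, m₂) := by
      by_cases hc : m₂ ∈ (tpath hT s m₁).support
      · rw [tdist_split hT w hc, tdist_adj hT w hm₁m₂.symm, Sym2.eq_swap]
      · have h1 := tdist_concat hT w hm₁m₂ hc
        by_cases hc2 : m₁ ∈ (tpath hT s m₂).support
        · exact (not_two_nbrs_support hT w hw hm₁m₂.symm hq''adj (Ne.symm hq''m₁)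
            hc2 hsq).elim
        · have h2 := tdist_concat hT w hm₁m₂.symm hc2
          rw [Sym2.eq_swap (a := m₂)] at h2
          linarith
    have hm₁P : m₁ ∈ (tpath hT u v).support := by
      rw [hdec₁, Walk.support_cons]
      exact List.mem_cons_of_mem _ (Walk.start_mem_support _)
    have hm₂P : m₂ ∈ (tpath hT u v).support := by
      rw [hdec₁, Walk.support_cons, hdec₂, Walk.support_cons]
      exact List.mem_cons_of_mem _ (List.mem_cons_of_mem _ (Walk.start_mem_support _))
    set z := tdist hT w u v + pathLeafStatus hT w (tpath hT u v) with hz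
    -- ℓ(m₁) exceeds z
    have hellm1 : z + w s(m₁, m₂) ≤ leafStatus hT w m₁ := by
      set F : V → ℝ := fun x => tdist hT w x m₁ - distToPath hT w x (tpath hT u v) with hF
      have hFnn : ∀ x ∈ leaves G, 0 ≤ F x := by
        intro x _
        simp only [hF]
        linarith [distToPath_le hT w hw (x := x) hm₁P]
      have hsub : ({u, v, s} : Finset V) ⊆ leaves G := by
        intro x hx
        simp only [Finset.mem_insert, Finset.mem_singleton] at hx
        rcases hx with rfl | rfl | rfl
        exacts [hu, hv, hsL]
      have h3 : ∑ x ∈ ({u, v, s} : Finset V), F x ≤ ∑ x ∈ leaves G, F x :=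
        Finset.sum_le_sum_of_subset_of_nonneg hsub (fun x hxL _ => hFnn x hxL)
      have hnm1 : u ∉ ({v, s} : Finset V) := by
        simp only [Finset.mem_insert, Finset.mem_singleton]
        push_neg
        exact ⟨huv, Ne.symm hsu⟩
      have hnm2 : v ∉ ({s} : Finset V) := by
        simp only [Finset.mem_singleton]
        exact Ne.symm hsv
      have hsum3 : ∑ x ∈ ({u, v, s} : Finset V), F x = F u + F v + F s := by
        rw [Finset.sum_insert hnm1, Finset.sum_insert hnm2, Finset.sum_singleton]
        ring
      have hFu : F u = w s(u, m₁) := by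
        simp only [hF]
        rw [distToPath_eq_zero hT w hw (Walk.start_mem_support _), tdist_adj hT w hum₁]
        ring
      have hFv : F v = tdist hT w m₁ v := by
        simp only [hF]
        rw [distToPath_eq_zero hT w hw (Walk.end_mem_support _), tdist_symm]
        ring
      have hFs : w s(m₁, m₂) ≤ F s := by
        simp only [hF]
        have := distToPath_le hT w hw (x := s) hm₂P
        linarith [hkey]
      have htuv : tdist hT w u v = w s(u, m₁) + tdist hT w m₁ v := by
        rw [tdist, hdec₁]
        simp [walkWeight, tdist]
      have hSig : ∑ x ∈ leaves G, F x
          = leafStatus hT w m₁ - pathLeafStatus hT w (tpath hT u v) := by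
        rw [leafStatus, pathLeafStatus, ← Finset.sum_sub_distrib]
        exact Finset.sum_congr rfl (fun x _ => by
          simp only [hF]; rw [tdist_symm hT w m₁ x])
      rw [hsum3, hSig, hFu, hFv] at h3
      rw [hz, htuv]
      linarith
    -- maximize leaf status over internal vertices
    set I : Finset V := univ.filter (fun y => G.degree y ≠ 1) with hI
    have hm₁I : m₁ ∈ I := by
      simp only [hI, mem_filter, mem_univ, true_and]
      intro h1
      have hsub : ({u, m₂} : Finset V) ⊆ G.neighborFinset m₁ := by
        intro y hy
        simp only [Finset.mem_insert, Finset.mem_singleton] at hy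
        rcases hy with rfl | rfl
        · exact (mem_neighborFinset G m₁ y).2 hum₁.symm
        · exact (mem_neighborFinset G m₁ y).2 hm₁m₂
      have := Finset.card_le_card hsub
      rw [Finset.card_insert_of_notMem (by simpa using hum₂), Finset.card_singleton,
        card_neighborFinset_eq_degree, h1] at this
      omega
    obtain ⟨mo, hmoI, hmomax⟩ := Finset.exists_max_image I (leafStatus hT w) ⟨m₁, hm₁I⟩
    have hmo1 : G.degree mo ≠ 1 := by
      simpa only [hI, mem_filter, mem_univ, true_and] using hmoI
    have hmoz : z < leafStatus hT w mo := by
      have := hmomax m₁ hm₁I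
      linarith
    have hmou : mo ≠ u := fun h => hmo1 (h ▸ hu1)
    obtain ⟨t₀, ht₀, _⟩ := tpath_decomp hT hmou
    have hdmo : 3 ≤ (G.neighborFinset mo).card := by
      have h1 : 0 < (G.neighborFinset mo).card :=
        Finset.card_pos.2 ⟨t₀, (mem_neighborFinset G mo t₀).2 ht₀⟩
      have h2 := hdeg mo
      rw [← card_neighborFinset_eq_degree] at h2
      rw [← card_neighborFinset_eq_degree] at hmo1
      omega
    set NL := (G.neighborFinset mo).filter (fun y => G.degree y = 1) with hNL
    by_cases hNL2 : 2 ≤ NL.card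
    · -- mo is the midpoint of a cherry beating z : contradiction
      obtain ⟨a, haN, b, hbN, hab⟩ := Finset.one_lt_card.1 hNL2
      have ha1 : G.degree a = 1 := (Finset.mem_filter.1 haN).2
      have hb1 : G.degree b = 1 := (Finset.mem_filter.1 hbN).2
      have haadj : G.Adj a mo :=
        ((mem_neighborFinset G mo a).1 (Finset.mem_filter.1 haN).1).symm
      have hbadj : G.Adj b mo :=
        ((mem_neighborFinset G mo b).1 (Finset.mem_filter.1 hbN).1).symm
      have hcz := cherry_z hT w hw ha1 hb1 hab haadj hbadj
      have hle := hmax a (mem_leaves_iff.2 ha1) b (mem_leaves_iff.2 hb1) hab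
      rw [← hcz] at hle
      linarith
    · -- mo has two internal neighbors : counting contradiction
      push_neg at hNL2
      have hIcard : 2 ≤ ((G.neighborFinset mo).filter (fun y => ¬ G.degree y = 1)).card := by
        have hfc := Finset.card_filter_add_card_filter_not
          (s := G.neighborFinset mo) (p := fun y => G.degree y = 1)
        rw [← hNL] at hfc
        omega
      have h1lt : 1 < ((G.neighborFinset mo).filter (fun y => ¬ G.degree y = 1)).card := by
        omega
      obtain ⟨q, hqm, q', hq'm, hqq'⟩ := Finset.one_lt_card.1 h1lt
      have hqadj : G.Adj mo q := (mem_neighborFinset G mo q).1 (Finset.mem_filter.1 hqm).1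
      have hq'adj : G.Adj mo q' := (mem_neighborFinset G mo q').1 (Finset.mem_filter.1 hq'm).1
      have hq1 : G.degree q ≠ 1 := (Finset.mem_filter.1 hqm).2
      have hq'1 : G.degree q' ≠ 1 := (Finset.mem_filter.1 hq'm).2
      set n := (leaves G).card with hn
      have count : ∀ r : V, G.Adj mo r → G.degree r ≠ 1 →
          (n : ℝ) ≤ 2 * ((leaves G).filter (fun x => r ∈ (tpath hT x mo).support)).card := by
        intro r hr hr1
        have hrI : r ∈ I := by simp only [hI, mem_filter, mem_univ, true_and]; exact hr1
        have hle : leafStatus hT w r ≤ leafStatus hT w mo := hmomax r hrI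
        have hd := ell_diff hT w hw hr
        have hwpos : 0 < w s(mo, r) := hw _ ((SimpleGraph.mem_edgeSet G).2 hr)
        set c₁ := ((leaves G).filter (fun x => r ∈ (tpath hT x mo).support)).card with hc₁
        set c₂ := ((leaves G).filter (fun x => r ∉ (tpath hT x mo).support)).card with hc₂
        have hcards : c₁ + c₂ = n := by
          rw [hc₁, hc₂, hn]
          exact Finset.card_filter_add_card_filter_not _
        have h0 : (0 : ℝ) ≤ ((c₁ : ℝ) - c₂) * w s(mo, r) := by linarith
        have h1 : (c₂ : ℝ) ≤ (c₁ : ℝ) := by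
          by_contra hcon
          push_neg at hcon
          have : ((c₁ : ℝ) - c₂) * w s(mo, r) < 0 :=
            mul_neg_of_neg_of_pos (by linarith) hwpos
          linarith
        have h2 : (n : ℝ) = (c₁ : ℝ) + c₂ := by exact_mod_cast hcards.symm
        linarith
      have hq_cnt := count q hqadj hq1
      have hq'_cnt := count q' hq'adj hq'1
      set Sq := (leaves G).filter (fun x => q ∈ (tpath hT x mo).support) with hSq
      set Sq' := (leaves G).filter (fun x => q' ∈ (tpath hT x mo).support) with hSq'
      have hdisj : Disjoint Sq Sq' := by
        rw [Finset.disjoint_left]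
        intro x hx hx'
        exact not_two_nbrs_support hT w hw hqadj hq'adj hqq'
          (Finset.mem_filter.1 hx).2 (Finset.mem_filter.1 hx').2
      have hq₃ex : (G.neighborFinset mo \ {q, q'}).Nonempty := by
        by_contra h
        rw [Finset.not_nonempty_iff_eq_empty, Finset.sdiff_eq_empty_iff_subset] at h
        have := Finset.card_le_card h
        have h2 : ({q, q'} : Finset V).card ≤ 2 :=
          (Finset.card_insert_le _ _).trans (by simp)
        omega
      obtain ⟨q₃, hq₃⟩ := hq₃ex
      rw [Finset.mem_sdiff] at hq₃
      have hq₃adj : G.Adj mo q₃ := (mem_neighborFinset G mo q₃).1 hq₃.1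
      have hq₃q : q₃ ≠ q := fun h => hq₃.2 (by simp [h])
      have hq₃q' : q₃ ≠ q' := fun h => hq₃.2 (by simp [h])
      obtain ⟨x₀, hx₀1, hx₀q₃⟩ := exists_leaf_dir hT hq₃adj
      have hx₀L : x₀ ∈ leaves G := mem_leaves_iff.2 hx₀1
      have hx₀Sq : x₀ ∉ Sq := by
        intro h
        exact not_two_nbrs_support hT w hw hqadj hq₃adj (Ne.symm hq₃q)
          (Finset.mem_filter.1 h).2 hx₀q₃
      have hx₀Sq' : x₀ ∉ Sq' := by
        intro h
        exact not_two_nbrs_support hT w hw hq'adj hq₃adj (Ne.symm hq₃q')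
          (Finset.mem_filter.1 h).2 hx₀q₃
      have hsub2 : insert x₀ (Sq ∪ Sq') ⊆ leaves G := by
        intro x hx
        simp only [Finset.mem_insert, Finset.mem_union] at hx
        rcases hx with rfl | hx | hx
        · exact hx₀L
        · exact (Finset.mem_filter.1 hx).1
        · exact (Finset.mem_filter.1 hx).1
      have hcard : Sq.card + Sq'.card + 1 ≤ n := by
        have h1 : (insert x₀ (Sq ∪ Sq')).card = Sq.card + Sq'.card + 1 := by
          rw [Finset.card_insert_of_notMem (by simp [hx₀Sq, hx₀Sq']),
            Finset.card_union_of_disjoint hdisj]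
        have h2 := Finset.card_le_card hsub2
        rw [h1] at h2
        omega
      have hcast : (Sq.card : ℝ) + Sq'.card + 1 ≤ (n : ℝ) := by exact_mod_cast hcard
      linarith
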